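/- For every n ≥ 1, the complete graph K_n on n vertices satisfies b^A_g(K_n) = ⌊n/2⌋ and b^I_g(K_n) = ⌊n/2⌋. -/

import Mathlib

open SimpleGraph

/-- The balance score of a state `(S0, S1)` in a graph `G`: the number of edges of `G` with
one endpoint in `S0` and the other in `S1`, minus the number of edges with both endpoints
in `S0` or both endpoints in `S1`. -/
noncomputable def bscore {V : Type*} (G : SimpleGraph V) (S0 S1 : Set V) : ℤ :=
  ({e ∈ G.edgeSet | ∃ u ∈ S0, ∃ v ∈ S1, e = s(u, v)}.ncard : ℤ) -
  ({e ∈ G.edgeSet | (∃ u ∈ S0, ∃ v ∈ S0, e = s(u, v)) ∨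
      (∃ u ∈ S1, ∃ v ∈ S1, e = s(u, v))}.ncard : ℤ)

/-- The value of the balance game computed by backward induction, with `k` moves remaining.
`t = true` means it is Admirable's (the minimizer's) turn, `t = false` means it is
Impish's (the maximizer's) turn.  `S0` is the set of vertices selected by Admirable so far,
`S1` the set selected by Impish. -/
noncomputable def gameVal {V : Type*} [Fintype V] (G : SimpleGraph V) :
    ℕ → Bool → Finset V → Finset V → ℤ
  | 0, _, S0, S1 => bscore G ↑S0 ↑S1
  | (k + 1), t, S0, S1 =>
    letI := Classical.decEq V
    if h : (Finset.univ \ (S0 ∪ S1)).Nonempty then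
      if t then (Finset.univ \ (S0 ∪ S1)).inf' h fun v => gameVal G k false (insert v S0) S1
      else (Finset.univ \ (S0 ∪ S1)).sup' h fun v => gameVal G k true S0 (insert v S1)
    else bscore G ↑S0 ↑S1

/-- The (A)-start game balance number `b^A_g(G)`. -/
noncomputable def balA {V : Type*} [Fintype V] (G : SimpleGraph V) : ℤ :=
  gameVal G (Fintype.card V) true ∅ ∅

/-- The (I)-start game balance number `b^I_g(G)`. -/
noncomputable def balI {V : Type*} [Fintype V] (G : SimpleGraph V) : ℤ :=
  gameVal G (Fintype.card V) false ∅ ∅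

/-- The value of the cordiality game computed by backward induction (final score is
`|bscore|`), with `k` moves remaining; `t = true` means it is Admirable's turn. -/
noncomputable def cordVal {V : Type*} [Fintype V] (G : SimpleGraph V) :
    ℕ → Bool → Finset V → Finset V → ℤ
  | 0, _, S0, S1 => |bscore G ↑S0 ↑S1|
  | (k + 1), t, S0, S1 =>
    letI := Classical.decEq V
    if h : (Finset.univ \ (S0 ∪ S1)).Nonempty then
      if t then (Finset.univ \ (S0 ∪ S1)).inf' h fun v => cordVal G k false (insert v S0) S1
      else (Finset.univ \ (S0 ∪ S1)).sup' h fun v => cordVal G k true S0 (insert v S1)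
    else |bscore G ↑S0 ↑S1|

/-- The (A)-start game cordiality number `c^A_g(G)`. -/
noncomputable def cordA {V : Type*} [Fintype V] (G : SimpleGraph V) : ℤ :=
  cordVal G (Fintype.card V) true ∅ ∅

/-- The (I)-start game cordiality number `c^I_g(G)`. -/
noncomputable def cordI {V : Type*} [Fintype V] (G : SimpleGraph V) : ℤ :=
  cordVal G (Fintype.card V) false ∅ ∅

lemma bscore_top {V : Type*} [DecidableEq V] (S0 S1 : Finset V) (h : Disjoint S0 S1) :
    bscore (⊤ : SimpleGraph V) ↑S0 ↑S1 =
      (S0.card : ℤ) * S1.card - ((S0.card.choose 2 : ℤ) + (S1.card.choose 2 : ℤ)) := by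
  have hcross : {e ∈ (⊤ : SimpleGraph V).edgeSet |
      ∃ u ∈ (S0 : Set V), ∃ v ∈ (S1 : Set V), e = s(u, v)}
      = ↑((S0 ×ˢ S1).image Sym2.mk.uncurry) := by
    ext e
    simp only [Set.mem_setOf_eq, Finset.coe_image, Set.mem_image, Finset.mem_coe,
      Finset.mem_product, Set.mem_setOf_eq]
    constructor
    · rintro ⟨he, u, hu, v, hv, rfl⟩
      exact ⟨(u, v), ⟨hu, hv⟩, rfl⟩
    · rintro ⟨⟨u, v⟩, ⟨hu, hv⟩, rfl⟩
      refine ⟨?_, u, hu, v, hv, rfl⟩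
      have : u ≠ v := fun huv => (Finset.disjoint_left.mp h hu) (huv ▸ hv)
      simpa [SimpleGraph.mem_edgeSet] using this
  have hinner : {e ∈ (⊤ : SimpleGraph V).edgeSet |
      (∃ u ∈ (S0 : Set V), ∃ v ∈ (S0 : Set V), e = s(u, v)) ∨
      (∃ u ∈ (S1 : Set V), ∃ v ∈ (S1 : Set V), e = s(u, v))}
      = ↑(S0.offDiag.image Sym2.mk.uncurry ∪ S1.offDiag.image Sym2.mk.uncurry) := by
    ext e
    simp only [Set.mem_setOf_eq, Finset.coe_union, Set.mem_union, Finset.coe_image,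
      Set.mem_image, Finset.mem_coe, Finset.mem_offDiag]
    constructor
    · rintro ⟨he, (⟨u, hu, v, hv, rfl⟩ | ⟨u, hu, v, hv, rfl⟩)⟩
      · have : u ≠ v := by simpa [SimpleGraph.mem_edgeSet] using he
        exact Or.inl ⟨(u, v), ⟨hu, hv, this⟩, rfl⟩
      · have : u ≠ v := by simpa [SimpleGraph.mem_edgeSet] using he
        exact Or.inr ⟨(u, v), ⟨hu, hv, this⟩, rfl⟩
    · rintro (⟨⟨u, v⟩, ⟨hu, hv, huv⟩, rfl⟩ | ⟨⟨u, v⟩, ⟨hu, hv, huv⟩, rfl⟩)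
      · exact ⟨by simpa [SimpleGraph.mem_edgeSet] using huv, Or.inl ⟨u, hu, v, hv, rfl⟩⟩
      · exact ⟨by simpa [SimpleGraph.mem_edgeSet] using huv, Or.inr ⟨u, hu, v, hv, rfl⟩⟩
  have hdisj : Disjoint (S0.offDiag.image Sym2.mk.uncurry) (S1.offDiag.image Sym2.mk.uncurry) := by
    rw [Finset.disjoint_left]
    rintro e he0 he1
    simp only [Finset.mem_image, Finset.mem_offDiag] at he0 he1
    obtain ⟨⟨u, v⟩, ⟨hu, hv, _⟩, rfl⟩ := he0
    obtain ⟨⟨a, b⟩, ⟨ha, hb, _⟩, heq⟩ := he1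
    rcases Sym2.eq_iff.mp heq with ⟨rfl, rfl⟩ | ⟨rfl, rfl⟩
    · exact Finset.disjoint_left.mp h hu ha
    · exact Finset.disjoint_left.mp h hv ha
  have hinj : Set.InjOn Sym2.mk.uncurry ((S0 ×ˢ S1 : Finset (V × V)) : Set (V × V)) := by
    rintro ⟨u, v⟩ huv ⟨a, b⟩ hab heq
    simp only [Finset.coe_product, Set.mem_prod, Finset.mem_coe] at huv hab
    rcases Sym2.eq_iff.mp heq with ⟨rfl, rfl⟩ | ⟨rfl, rfl⟩
    · rfl
    · exact absurd hab.2 (Finset.disjoint_left.mp h huv.1)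
  rw [bscore, hcross, hinner, Set.ncard_coe_finset, Set.ncard_coe_finset,
    Finset.card_union_of_disjoint hdisj, Sym2.card_image_offDiag, Sym2.card_image_offDiag,
    Finset.card_image_of_injOn (by simpa using hinj), Finset.card_product]
  push_cast
  ring

def fI (a b : ℕ) : ℤ := (a : ℤ) * b - ((a.choose 2 : ℤ) + (b.choose 2 : ℤ))

def tgt : ℕ → Bool → ℕ → ℕ → ℤ
  | 0, _, a, b => fI a b
  | (k + 1), true, a, b => tgt k false (a + 1) b
  | (k + 1), false, a, b => tgt k true a (b + 1)

lemma gameVal_top {V : Type*} [Fintype V] (k : ℕ) :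
    ∀ (t : Bool) (S0 S1 : Finset V), Disjoint S0 S1 →
      S0.card + S1.card + k = Fintype.card V →
      gameVal (⊤ : SimpleGraph V) k t S0 S1 = tgt k t S0.card S1.card := by
  induction k with
  | zero =>
    intro t S0 S1 hd _
    letI := Classical.decEq V
    simp only [gameVal, tgt, fI]
    exact bscore_top S0 S1 hd
  | succ k ih =>
    intro t S0 S1 hd hcard
    letI := Classical.decEq V
    have hc : (Finset.univ \ (S0 ∪ S1)).card = k + 1 := by
      rw [Finset.card_sdiff_of_subset (Finset.subset_univ _), Finset.card_union_of_disjoint hd,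
        Finset.card_univ]
      omega
    have hne : (Finset.univ \ (S0 ∪ S1)).Nonempty := by
      rw [← Finset.card_pos, hc]; omega
    have hmem : ∀ v ∈ Finset.univ \ (S0 ∪ S1), v ∉ S0 ∧ v ∉ S1 := by
      intro v hv
      simp only [Finset.mem_sdiff, Finset.mem_union] at hv
      tauto
    rw [gameVal, dif_pos hne]
    cases t with
    | true =>
      have key : ∀ v ∈ Finset.univ \ (S0 ∪ S1),
          gameVal (⊤ : SimpleGraph V) k false (insert v S0) S1
            = tgt k false (S0.card + 1) S1.card := by
        intro v hv
        obtain ⟨hv0, hv1⟩ := hmem v hv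
        have hd' : Disjoint (insert v S0) S1 := by
          rw [Finset.disjoint_insert_left]; exact ⟨hv1, hd⟩
        rw [ih false (insert v S0) S1 hd'
          (by rw [Finset.card_insert_of_notMem hv0]; omega),
          Finset.card_insert_of_notMem hv0]
      simp only [if_true]
      apply le_antisymm
      · obtain ⟨v, hv⟩ := hne
        exact (Finset.inf'_le _ hv).trans_eq (key v hv)
      · exact Finset.le_inf' _ _ fun v hv => (key v hv).ge
    | false =>
      have key : ∀ v ∈ Finset.univ \ (S0 ∪ S1),
          gameVal (⊤ : SimpleGraph V) k true S0 (insert v S1)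
            = tgt k true S0.card (S1.card + 1) := by
        intro v hv
        obtain ⟨hv0, hv1⟩ := hmem v hv
        have hd' : Disjoint S0 (insert v S1) := by
          rw [Finset.disjoint_insert_right]; exact ⟨hv0, hd⟩
        rw [ih true S0 (insert v S1) hd'
          (by rw [Finset.card_insert_of_notMem hv1]; omega),
          Finset.card_insert_of_notMem hv1]
      simp only [Bool.false_eq_true, if_false]
      apply le_antisymm
      · exact Finset.sup'_le _ _ fun v hv => (key v hv).le
      · obtain ⟨v, hv⟩ := hne
        exact (key v hv).ge.trans
          (Finset.le_sup' (fun v => gameVal (⊤ : SimpleGraph V) k true S0 (insert v S1)) hv)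

lemma tgt_eval (k : ℕ) : ∀ (t : Bool) (a b : ℕ),
    tgt k t a b = if t then fI (a + (k + 1) / 2) (b + k / 2)
      else fI (a + k / 2) (b + (k + 1) / 2) := by
  induction k with
  | zero => intro t a b; cases t <;> simp [tgt]
  | succ k ih =>
    intro t a b
    cases t with
    | true =>
      rw [show tgt (k + 1) true a b = tgt k false (a + 1) b from rfl, ih]
      simp only [if_false, if_true, Bool.false_eq_true]
      congr 1 <;> omega
    | false =>
      rw [show tgt (k + 1) false a b = tgt k true a (b + 1) from rfl, ih]
      simp only [if_false, if_true, Bool.false_eq_true]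
      congr 1 <;> omega

lemma two_mul_choose_two (m : ℕ) : 2 * (m.choose 2 : ℤ) = m * m - m := by
  induction m with
  | zero => simp
  | succ m ih =>
    rw [Nat.choose_succ_succ, Nat.choose_one_right]
    push_cast
    push_cast at ih
    linarith

lemma fI_eval2 (p q : ℕ) (h : q = p ∨ q = p + 1) : fI p q = p := by
  have hp := two_mul_choose_two p
  have hq := two_mul_choose_two q
  rcases h with rfl | rfl
  · unfold fI; push_cast at *; nlinarith
  · unfold fI; push_cast at *; nlinarith

lemma fI_eval (p q : ℕ) (h : p = q ∨ p = q + 1) : fI p q = q := by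
  have hp := two_mul_choose_two p
  have hq := two_mul_choose_two q
  rcases h with rfl | rfl
  · unfold fI; push_cast at *; nlinarith
  · unfold fI; push_cast at *; nlinarith

theorem statement_11 (n : ℕ) (hn : 1 ≤ n) :
    balA (⊤ : SimpleGraph (Fin n)) = ((n / 2 : ℕ) : ℤ) ∧
    balI (⊤ : SimpleGraph (Fin n)) = ((n / 2 : ℕ) : ℤ) := by
  have hcard : Fintype.card (Fin n) = n := Fintype.card_fin n
  constructor
  · rw [balA, hcard, gameVal_top n true ∅ ∅ (by simp) (by simp [hcard]),
      Finset.card_empty, tgt_eval]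
    simp only [if_true, Nat.zero_add, zero_add]
    exact fI_eval _ _ (by omega)
  · rw [balI, hcard, gameVal_top n false ∅ ∅ (by simp) (by simp [hcard]),
      Finset.card_empty, tgt_eval]
    simp only [Bool.false_eq_true, if_false, zero_add]
    exact fI_eval2 _ _ (by omega)
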